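/- Let m = 2n+1 be an odd positive integer, f : Q → Q a function, b, c nonzero rationals, and u, v, w rationals with all denominators nonzero. Define p, q, T as in the proof of Theorem 2.1, and set D = f(u)·T^(m−1). Then the point P2 = (v^(−2)·f(u)·T^(m−2), f(u)^n·p·T^(n(m−1))) satisfies y^2 = x^m + b·D^(m−1), and the point P3 = (f(u)·T^(m−2), f(u)^n·q·T^(n(m−1))) satisfies y^2 = x^m + c·D^(m−1). -/

import Mathlib

theorem stmt2 (f : ℚ → ℚ) (n m : ℕ) (hm : m = 2 * n + 1) (b c u v w : ℚ)
    (hb : b ≠ 0) (hc : c ≠ 0) (hv : v ≠ 0) (hw : w ≠ 0) (hfu : f u ≠ 0)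
    (p q T D : ℚ)
    (hp : p = ((b + w ^ 2) * v ^ (2 * m) - c) / (2 * w * v ^ (2 * m)))
    (hq : q = ((b - w ^ 2) * v ^ (2 * m) - c) / (2 * w * v ^ m))
    (hden : v ^ (4 * m) * w ^ 4 - 2 * v ^ (2 * m) * (b * v ^ (2 * m) + c) * w ^ 2
      + (b * v ^ (2 * m) - c) ^ 2 ≠ 0)
    (hT : T = 4 * w ^ 2 * v ^ (2 * m) * f u /
      (v ^ (4 * m) * w ^ 4 - 2 * v ^ (2 * m) * (b * v ^ (2 * m) + c) * w ^ 2
        + (b * v ^ (2 * m) - c) ^ 2))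
    (hT0 : T ≠ 0)
    (hD : D = f u * T ^ (m - 1)) :
    ((f u) ^ n * p * T ^ (n * (m - 1))) ^ 2
      = (v ^ (-2 : ℤ) * f u * T ^ ((m : ℤ) - 2)) ^ m + b * D ^ (m - 1) ∧
    ((f u) ^ n * q * T ^ (n * (m - 1))) ^ 2
      = (f u * T ^ ((m : ℤ) - 2)) ^ m + c * D ^ (m - 1) := by
  subst hm hD
  set A := f u with hA
  -- key identities
  have hv2m : v ^ (2 * (2 * n + 1)) ≠ 0 := pow_ne_zero _ hv
  have key1 : v ^ (2 * (2 * n + 1)) * (T * p ^ 2) = A + v ^ (2 * (2 * n + 1)) * (T * b) := by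
    subst hp hT
    generalize hE : v ^ (4 * (2 * n + 1)) * w ^ 4 - 2 * v ^ (2 * (2 * n + 1)) * (b * v ^ (2 * (2 * n + 1)) + c) * w ^ 2 + (b * v ^ (2 * (2 * n + 1)) - c) ^ 2 = E at hden ⊢
    field_simp
    subst hE
    ring
  have key2 : T * q ^ 2 = A + T * c := by
    subst hq hT
    generalize hE : v ^ (4 * (2 * n + 1)) * w ^ 4 - 2 * v ^ (2 * (2 * n + 1)) * (b * v ^ (2 * (2 * n + 1)) + c) * w ^ 2 + (b * v ^ (2 * (2 * n + 1)) - c) ^ 2 = E at hden ⊢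
    field_simp
    subst hE
    ring
  -- rewrite the zpow of T
  have hTz : T ^ (((2 * n + 1 : ℕ) : ℤ) - 2) = T ^ (2 * n) * T⁻¹ := by
    have h1 : ((2 * n + 1 : ℕ) : ℤ) - 2 = ((2 * n : ℕ) : ℤ) - 1 := by push_cast; ring
    rw [h1, zpow_sub_one₀ hT0, zpow_natCast]
  have hvz : (v : ℚ) ^ (-2 : ℤ) = (v ^ 2)⁻¹ := by
    rw [show (-2:ℤ) = -((2:ℕ):ℤ) by norm_num, zpow_neg, zpow_natCast]
  rw [hTz, hvz]
  have hsub : (2 * n + 1) - 1 = 2 * n := by omega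
  rw [hsub]
  constructor
  · have hx : (v ^ 2)⁻¹ * A * (T ^ (2 * n) * T⁻¹) = A * T ^ (2 * n) / (v ^ 2 * T) := by
      field_simp
    rw [hx, div_pow]
    have hden2 : (v ^ 2 * T) ^ (2 * n + 1) ≠ 0 := pow_ne_zero _ (mul_ne_zero (pow_ne_zero _ hv) hT0)
    rw [div_add' _ _ _ hden2, eq_div_iff hden2]
    linear_combination (A ^ (2 * n) * T ^ (4 * n ^ 2 + 2 * n)) * key1
  · have hx : A * (T ^ (2 * n) * T⁻¹) = A * T ^ (2 * n) / T := by
      field_simp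
    rw [hx, div_pow]
    have hden2 : T ^ (2 * n + 1) ≠ 0 := pow_ne_zero _ hT0
    rw [div_add' _ _ _ hden2, eq_div_iff hden2]
    linear_combination (A ^ (2 * n) * T ^ (4 * n ^ 2 + 2 * n)) * key2
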